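/- (Consistency of the cost-sensitive hinge loss.) Let c ∈ (0,1). The equivalence 'for every η ∈ (0,1), L(η, δ₊) < L(η, −δ₋) if and only if η > c' holds if and only if ω₊/ω₋ = (1 − c)/c. In particular, the weighted variable-margin hinge loss is consistent for the cost-sensitive classification problem with cost c (predicting positive exactly when η > c) if and only if ω₊/ω₋ = (1 − c)/c, regardless of the values of the margins δ₊, δ₋. -/

import Mathlib

/-- Consistency of the cost-sensitive hinge loss: the weighted variable-margin hinge loss
is consistent for cost `c` iff `ω₊/ω₋ = (1 − c)/c`, regardless of the margins. -/
theorem cost_sensitive_hinge_consistency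
    (ωp ωm δp δm : ℝ) (hωp : 0 < ωp) (hωm : 0 < ωm)
    (hδp : 0 ≤ δp) (hδm : 0 ≤ δm) (hδ : 0 < δp + δm)
    (L : ℝ → ℝ → ℝ)
    (hL : ∀ η f : ℝ, L η f = η * (ωp * max (δp - f) 0) + (1 - η) * (ωm * max (δm + f) 0))
    (c : ℝ) (hc : c ∈ Set.Ioo (0 : ℝ) 1) :
    (∀ η ∈ Set.Ioo (0 : ℝ) 1, (L η δp < L η (-δm) ↔ c < η)) ↔ ωp / ωm = (1 - c) / c := by
  obtain ⟨hc0, hc1⟩ := hc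
  have key : ∀ η : ℝ, (L η δp < L η (-δm) ↔ (1 - η) * ωm < η * ωp) := by
    intro η
    rw [hL, hL]
    have h1 : max (δp - δp) 0 = 0 := by simp
    have h2 : max (δm + δp) 0 = δm + δp := max_eq_left (by linarith)
    have h3 : max (δp - -δm) 0 = δp + δm := by
      rw [max_eq_left (by linarith)]; ring
    have h4 : max (δm + -δm) 0 = 0 := by simp
    rw [h1, h2, h3, h4]; simp only [mul_zero, zero_add, add_zero]
    rw [show (1 - η) * (ωm * (δm + δp)) = ((1 - η) * ωm) * (δp + δm) by ring,
        show η * (ωp * (δp + δm)) = (η * ωp) * (δp + δm) by ring]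
    exact mul_lt_mul_iff_left₀ hδ
  constructor
  · intro h
    set t : ℝ := ωm / (ωp + ωm) with ht
    have hsum : 0 < ωp + ωm := by linarith
    have ht0 : 0 < t := div_pos hωm hsum
    have ht1 : t < 1 := (div_lt_one hsum).2 (by linarith)
    have htc : t = c := by
      by_contra hne
      rcases lt_or_gt_of_ne hne with hlt | hgt
      · have hη : (t + c) / 2 ∈ Set.Ioo (0 : ℝ) 1 := ⟨by linarith, by linarith⟩
        have := (h _ hη).1 ((key _).2 (by
          have : t < (t + c) / 2 := by linarith
          rw [ht, div_lt_iff₀ hsum] at this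
          nlinarith))
        linarith
      · have hη : (t + c) / 2 ∈ Set.Ioo (0 : ℝ) 1 := ⟨by linarith, by linarith⟩
        have h2 := (h _ hη).2 (by linarith)
        rw [key] at h2
        have : t < (t + c) / 2 := by
          rw [ht, div_lt_iff₀ hsum]; nlinarith
        linarith
    have : ωm = c * (ωp + ωm) := by
      rw [ht, div_eq_iff hsum.ne'] at htc; linarith [htc]
    rw [div_eq_div_iff hωm.ne' hc0.ne']
    nlinarith
  · intro h η hη
    have heq : ωp * c = (1 - c) * ωm := by
      rw [div_eq_div_iff hωm.ne' hc0.ne'] at h; linarith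
    rw [key]
    obtain ⟨hη0, hη1⟩ := hη
    constructor
    · intro hlt; nlinarith
    · intro hlt; nlinarith
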